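/- For the canonical paths η_{x,y} on the torus S_N (moving each coordinate in turn along the shortest segment), the congestion quantity M_N := N^{−d} · max_{bond a} Σ_{bonds a'} M(a,a') satisfies M_N ≤ 4d·N², where M(a,a') = #{(x,y) ∈ S_N × S_N : a, a' ∈ η_{x,y}}. -/

import Mathlib

open Real Finset

noncomputable section

attribute [local instance] Classical.propDecidable

/-- Sites of the `d`-dimensional discrete torus of side `N`. -/
abbrev TorusV (d N : ℕ) := Fin d → ZMod N

/-- Unit vector in direction `i` on the torus. -/
def tunit (d N : ℕ) (i : Fin d) : TorusV d N := fun j => if j = i then 1 else 0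

/-- A bond of the torus, encoded by base point and direction. -/
abbrev Bond (d N : ℕ) := TorusV d N × Fin d

/-- One-dimensional segment on `ZMod N` from `a` to `b` along the longest arc
(ties broken by going in the `+` direction). -/
def seg (N : ℕ) [NeZero N] (a b : ZMod N) : List (ZMod N) :=
  if (a - b).val ≤ (b - a).val then
    (List.range ((b - a).val + 1)).map (fun k => a + (k : ZMod N))
  else
    (List.range ((a - b).val + 1)).map (fun k => a - (k : ZMod N))

/-- Intermediate point of the canonical path: coordinates `< j` already matched to
`y`, coordinate `j` equal to `c`, coordinates `> j` still those of `x`. -/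
def midpt (d N : ℕ) (x y : TorusV d N) (j : Fin d) (c : ZMod N) : TorusV d N :=
  fun i => if i < j then y i else if i = j then c else x i

/-- Canonical path `η_{x,y}`: match the coordinates `1, 2, …, d` one at a time,
each along the longest segment. -/
def cpath (d N : ℕ) [NeZero N] (x y : TorusV d N) : List (TorusV d N) :=
  (List.finRange d).flatMap (fun j => (seg N (x j) (y j)).map (midpt d N x y j))

/-- The bond `b` lies on the path `l`. -/
def onPath (d N : ℕ) (b : Bond d N) (l : List (TorusV d N)) : Prop :=
  ∃ k : ℕ,
    (l[k]? = some b.1 ∧ l[k + 1]? = some (b.1 + tunit d N b.2)) ∨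
    (l[k]? = some (b.1 + tunit d N b.2) ∧ l[k + 1]? = some b.1)

/-- `M(a,a') = #{(x,y) : a, a' ∈ η_{x,y}}`. -/
def Mcount (d N : ℕ) [NeZero N] (a a' : Bond d N) : ℕ :=
  (Finset.univ.filter (fun p : TorusV d N × TorusV d N =>
    onPath d N a (cpath d N p.1 p.2) ∧ onPath d N a' (cpath d N p.1 p.2))).card


lemma midpt_lt {d N : ℕ} {x y : TorusV d N} {j : Fin d} {c : ZMod N} {i : Fin d}
    (h : i < j) : midpt d N x y j c i = y i := by simp [midpt, h]

lemma midpt_gt {d N : ℕ} {x y : TorusV d N} {j : Fin d} {c : ZMod N} {i : Fin d}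
    (h : j < i) : midpt d N x y j c i = x i := by
  simp [midpt, not_lt_of_gt h, (ne_of_gt h)]

lemma zmodOneNeZero {N : ℕ} (hN : 2 ≤ N) : (1 : ZMod N) ≠ 0 := by
  haveI : Fact (1 < N) := ⟨hN⟩
  exact one_ne_zero

lemma tunit_apply_self {d N : ℕ} (i : Fin d) : tunit d N i i = 1 := by simp [tunit]

lemma tunit_apply_ne {d N : ℕ} {i j : Fin d} (h : j ≠ i) : tunit d N i j = 0 := by
  simp [tunit, h]

lemma tunit_inj {d N : ℕ} (hN : 2 ≤ N) {i j : Fin d}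
    (h : tunit d N i = tunit d N j) : i = j := by
  by_contra hne
  have := congrFun h i
  rw [tunit_apply_self, tunit_apply_ne hne] at this
  exact zmodOneNeZero hN this

lemma mem_cpath {d N : ℕ} [NeZero N] {x y p : TorusV d N} (h : p ∈ cpath d N x y) :
    ∃ j c, p = midpt d N x y j c := by
  simp only [cpath, List.mem_flatMap, List.mem_map, List.mem_finRange] at h
  obtain ⟨j, _, c, _, hc⟩ := h
  exact ⟨j, c, hc.symm⟩

lemma mem_of_get? {α : Type*} {l : List α} {k : ℕ} {a : α} (h : l[k]? = some a) : a ∈ l := by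
  exact List.mem_of_getElem? h

/-- structure lemma: the coordinates of the base of a bond on the path. -/
lemma coords_of_onPath {d N : ℕ} [NeZero N] (hN : 2 ≤ N) {x y : TorusV d N} {a : Bond d N}
    (h : onPath d N a (cpath d N x y)) :
    (∀ i, i < a.2 → y i = a.1 i) ∧ (∀ i, a.2 < i → x i = a.1 i) := by
  obtain ⟨k, hk⟩ := h
  have h1 : a.1 ∈ cpath d N x y := by
    rcases hk with ⟨h1, _⟩ | ⟨_, h2⟩
    · exact mem_of_get? h1
    · exact mem_of_get? h2
  have h2 : a.1 + tunit d N a.2 ∈ cpath d N x y := by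
    rcases hk with ⟨_, h2⟩ | ⟨h1, _⟩
    · exact mem_of_get? h2
    · exact mem_of_get? h1
  obtain ⟨j, c, hp⟩ := mem_cpath h1
  obtain ⟨j', c', hp'⟩ := mem_cpath h2
  set u := a.2 with hu
  have hadd : ∀ i, (a.1 + tunit d N u) i = a.1 i + tunit d N u i := fun i => rfl
  have hne10 : (1 : ZMod N) ≠ 0 := zmodOneNeZero hN
  -- not both j, j' above u
  have c1 : ¬ (u < j ∧ u < j') := by
    rintro ⟨hj, hj'⟩
    have e1 : a.1 u = y u := by rw [hp]; exact midpt_lt hj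
    have e2 : a.1 u + 1 = y u := by
      have := congrFun hp' u
      rw [hadd, tunit_apply_self] at this
      rw [this]; exact midpt_lt hj'
    exact hne10 (by linear_combination e2 - e1)
  have c2 : ¬ (j < u ∧ j' < u) := by
    rintro ⟨hj, hj'⟩
    have e1 : a.1 u = x u := by rw [hp]; exact midpt_gt hj
    have e2 : a.1 u + 1 = x u := by
      have := congrFun hp' u
      rw [hadd, tunit_apply_self] at this
      rw [this]; exact midpt_gt hj'
    exact hne10 (by linear_combination e2 - e1)
  constructor
  · intro i hi
    by_cases hcase : u ≤ j
    · have : i < j := lt_of_lt_of_le hi hcase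
      rw [hp]; exact (midpt_lt this).symm
    · push_neg at hcase
      have hj' : u ≤ j' := by
        by_contra hc
        push_neg at hc
        exact c2 ⟨hcase, hc⟩
      have hij' : i < j' := lt_of_lt_of_le hi hj'
      have := congrFun hp' i
      rw [hadd, tunit_apply_ne (ne_of_lt hi), add_zero] at this
      rw [this]; exact (midpt_lt hij').symm
  · intro i hi
    by_cases hcase : j < i
    · rw [hp]; exact (midpt_gt hcase).symm
    · push_neg at hcase
      have huj : u < j := lt_of_lt_of_le hi hcase
      have hj' : j' < i := by
        by_contra hc
        push_neg at hc
        exact c1 ⟨huj, lt_of_lt_of_le hi hc⟩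
      have := congrFun hp' i
      rw [hadd, tunit_apply_ne (ne_of_gt hi), add_zero] at this
      rw [this]; exact (midpt_gt hj').symm

lemma card_onPath_le {d N : ℕ} [NeZero N] (hN : 2 ≤ N) (a : Bond d N) :
    (Finset.univ.filter (fun p : TorusV d N × TorusV d N =>
      onPath d N a (cpath d N p.1 p.2))).card ≤ N ^ (d + 1) := by
  classical
  have key : (Finset.univ.filter (fun p : TorusV d N × TorusV d N =>
      onPath d N a (cpath d N p.1 p.2))).card ≤
      (Finset.univ : Finset (TorusV d N × ZMod N)).card := by
    apply Finset.card_le_card_of_injOn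
      (fun p => ((fun i => if i ≤ a.2 then p.1 i else p.2 i), p.2 a.2))
    · intro _ _; exact Finset.mem_univ _
    · intro p hp q hq hfq
      simp only [Finset.coe_filter, Set.mem_setOf_eq, Finset.mem_univ, true_and] at hp hq
      obtain ⟨hpy, hpx⟩ := coords_of_onPath hN hp
      obtain ⟨hqy, hqx⟩ := coords_of_onPath hN hq
      have h1 := congrArg Prod.fst hfq
      have h2 := congrArg Prod.snd hfq
      simp only at h1 h2
      have hx : p.1 = q.1 := by
        funext i
        rcases le_or_gt i a.2 with hle | hgt
        · have := congrFun h1 i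
          simpa [hle] using this
        · rw [hpx i hgt, hqx i hgt]
      have hy : p.2 = q.2 := by
        funext i
        rcases lt_trichotomy i a.2 with hlt | heq | hgt
        · rw [hpy i hlt, hqy i hlt]
        · rw [heq]; exact h2
        · have := congrFun h1 i
          simpa [not_le_of_gt hgt] using this
      exact Prod.ext hx hy
  calc _ ≤ (Finset.univ : Finset (TorusV d N × ZMod N)).card := key
    _ = N ^ (d + 1) := by
      simp [Finset.card_univ, ZMod.card]
      ring

lemma seg_length_le {N : ℕ} [NeZero N] (a b : ZMod N) : (seg N a b).length ≤ N := by
  rw [seg]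
  split <;> simp [Function.comp_def] <;>
    exact Nat.succ_le_of_lt (ZMod.val_lt _)

lemma flatMap_length_le {α β : Type*} (l : List α) (f : α → List β) (M : ℕ)
    (h : ∀ x ∈ l, (f x).length ≤ M) : (l.flatMap f).length ≤ l.length * M := by
  induction l with
  | nil => simp
  | cons a t ih =>
      simp only [List.flatMap_cons, List.length_append, List.length_cons]
      have := ih (fun x hx => h x (List.mem_cons_of_mem a hx))
      have ha := h a (List.mem_cons_self)
      calc (f a).length + (t.flatMap f).length ≤ M + t.length * M := Nat.add_le_add ha this
        _ = (t.length + 1) * M := by ring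

lemma cpath_length_le {d N : ℕ} [NeZero N] (x y : TorusV d N) :
    (cpath d N x y).length ≤ d * N := by
  have := flatMap_length_le (List.finRange d)
    (fun j => (seg N (x j) (y j)).map (midpt d N x y j)) N
    (fun j _ => by simpa using seg_length_le (x j) (y j))
  simpa [cpath, List.length_finRange] using this

/-- key function for counting bonds on a path -/
def pick {d N : ℕ} [NeZero N] (l : List (TorusV d N)) (a : Bond d N) : ℕ × Bool :=
  if h : onPath d N a l then
    (Nat.find h, decide (l[Nat.find h]? = some a.1))
  else (0, true)

lemma card_bonds_on_le {d N : ℕ} [NeZero N] (hN : 2 ≤ N) (x y : TorusV d N) :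
    (Finset.univ.filter (fun a' : Bond d N =>
      onPath d N a' (cpath d N x y))).card ≤ 2 * (d * N) := by
  classical
  set l := cpath d N x y with hl
  have tunit_ne : ∀ i : Fin d, tunit d N i ≠ 0 := by
    intro i h
    exact zmodOneNeZero hN (by simpa [tunit_apply_self] using congrFun h i)
  have key : (Finset.univ.filter (fun a' : Bond d N => onPath d N a' l)).card ≤
      ((Finset.range (d * N)) ×ˢ (Finset.univ : Finset Bool)).card := by
    apply Finset.card_le_card_of_injOn (pick l)
    · intro a ha
      simp only [Finset.coe_filter, Set.mem_setOf_eq, Finset.mem_univ, true_and] at ha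
      rw [Finset.mem_coe, Finset.mem_product]
      refine ⟨?_, Finset.mem_univ _⟩
      rw [Finset.mem_range, pick, dif_pos ha]
      have hspec := Nat.find_spec ha
      have hlt : Nat.find ha + 1 < l.length := by
        rcases hspec with ⟨_, h2⟩ | ⟨_, h2⟩ <;>
          exact (List.getElem?_eq_some_iff.mp h2).1
      have := cpath_length_le x y
      rw [← hl] at this
      omega
    · intro a ha b hb hab
      simp only [Finset.coe_filter, Set.mem_setOf_eq, Finset.mem_univ, true_and] at ha hb
      rw [pick, dif_pos ha, pick, dif_pos hb] at hab
      have hk : Nat.find ha = Nat.find hb := congrArg Prod.fst hab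
      have hb2 : decide (l[Nat.find ha]? = some a.1)
          = decide (l[Nat.find hb]? = some b.1) := congrArg Prod.snd hab
      have hbools : (l[Nat.find ha]? = some a.1) ↔ (l[Nat.find hb]? = some b.1) :=
        decide_eq_decide.mp hb2
      set k := Nat.find ha with hkdef
      rw [← hk] at hbools
      have hsa := Nat.find_spec ha
      have hsb := Nat.find_spec hb
      rw [← hk] at hsb
      -- each disjunct excludes the other via distinctness of endpoints
      have hdist : ∀ c : Bond d N, c.1 ≠ c.1 + tunit d N c.2 := by
        intro c hc
        apply tunit_ne c.2
        have h2 : c.1 + tunit d N c.2 - c.1 = c.1 - c.1 := by rw [← hc]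
        simpa using h2
      -- determine both in the same case
      rcases hsa with ⟨ha1, ha2⟩ | ⟨ha1, ha2⟩ <;> rcases hsb with ⟨hb1, hb2⟩ | ⟨hb1, hb2⟩
      · have e1 : a.1 = b.1 := by
          have := ha1.symm.trans hb1
          exact Option.some_injective _ this
        have e2 : a.1 + tunit d N a.2 = b.1 + tunit d N b.2 := by
          have := ha2.symm.trans hb2
          exact Option.some_injective _ this
        have : tunit d N a.2 = tunit d N b.2 := by
          rw [e1] at e2
          exact add_left_cancel e2
        exact Prod.ext e1 (tunit_inj hN this)
      · exfalso
        have hba : l[k]? = some a.1 := ha1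
        have : l[k]? = some b.1 := hbools.mp hba
        have e : b.1 = b.1 + tunit d N b.2 := Option.some_injective _ (this.symm.trans hb1)
        exact hdist b e
      · exfalso
        have hbb : l[k]? = some b.1 := hb1
        have : l[k]? = some a.1 := hbools.mpr hbb
        have e : a.1 = a.1 + tunit d N a.2 := Option.some_injective _ (this.symm.trans ha1)
        exact hdist a e
      · have e1 : a.1 = b.1 := by
          have := ha2.symm.trans hb2
          exact Option.some_injective _ this
        have e2 : a.1 + tunit d N a.2 = b.1 + tunit d N b.2 := by
          have := ha1.symm.trans hb1
          exact Option.some_injective _ this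
        have : tunit d N a.2 = tunit d N b.2 := by
          rw [e1] at e2
          exact add_left_cancel e2
        exact Prod.ext e1 (tunit_inj hN this)
  calc _ ≤ ((Finset.range (d * N)) ×ˢ (Finset.univ : Finset Bool)).card := key
    _ = 2 * (d * N) := by simp [Finset.card_product]; ring

lemma sum_Mcount_le {d N : ℕ} [NeZero N] (a : Bond d N) :
    ∑ a' : Bond d N, Mcount d N a a' ≤ 4 * d * N ^ (d + 2) := by
  classical
  rcases lt_or_ge N 2 with hN | hN
  · -- N = 1
    have hN1 : N = 1 := by have := NeZero.pos N; omega
    subst hN1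
    have hb : ∀ a' : Bond d 1, Mcount d 1 a a' ≤ 1 := by
      intro a'
      calc Mcount d 1 a a' ≤ (Finset.univ : Finset (TorusV d 1 × TorusV d 1)).card :=
            Finset.card_filter_le _ _
        _ = 1 := by simp [Finset.card_univ, ZMod.card]
    calc ∑ a' : Bond d 1, Mcount d 1 a a' ≤ ∑ _a' : Bond d 1, 1 :=
          Finset.sum_le_sum fun a' _ => hb a'
      _ = Fintype.card (Bond d 1) := by simp
      _ = d := by simp [Fintype.card_prod, ZMod.card]
      _ ≤ 4 * d * 1 ^ (d + 2) := by simp; omega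
  · -- N ≥ 2
    have h1 : ∀ a' : Bond d N, Mcount d N a a' =
        ∑ p : TorusV d N × TorusV d N,
          if onPath d N a (cpath d N p.1 p.2) ∧ onPath d N a' (cpath d N p.1 p.2)
          then 1 else 0 := by
      intro a'
      rw [Mcount, Finset.card_filter]
    calc ∑ a' : Bond d N, Mcount d N a a'
        = ∑ a' : Bond d N, ∑ p : TorusV d N × TorusV d N,
            if onPath d N a (cpath d N p.1 p.2) ∧ onPath d N a' (cpath d N p.1 p.2)
            then 1 else 0 := Finset.sum_congr rfl fun a' _ => h1 a'
      _ = ∑ p : TorusV d N × TorusV d N, ∑ a' : Bond d N,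
            if onPath d N a (cpath d N p.1 p.2) ∧ onPath d N a' (cpath d N p.1 p.2)
            then 1 else 0 := Finset.sum_comm
      _ ≤ ∑ p : TorusV d N × TorusV d N,
            (if onPath d N a (cpath d N p.1 p.2) then 2 * (d * N) else 0) := by
          apply Finset.sum_le_sum
          intro p _
          by_cases hA : onPath d N a (cpath d N p.1 p.2)
          · rw [if_pos hA]
            calc (∑ a' : Bond d N,
                if onPath d N a (cpath d N p.1 p.2) ∧ onPath d N a' (cpath d N p.1 p.2)
                then 1 else 0)
                = ∑ a' : Bond d N,
                  if onPath d N a' (cpath d N p.1 p.2) then 1 else 0 := by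
                    apply Finset.sum_congr rfl
                    intro a' _
                    simp [hA]
              _ = (Finset.univ.filter (fun a' : Bond d N =>
                    onPath d N a' (cpath d N p.1 p.2))).card := (Finset.card_filter _ _).symm
              _ ≤ 2 * (d * N) := card_bonds_on_le hN p.1 p.2
          · rw [if_neg hA]
            apply le_of_eq
            apply Finset.sum_eq_zero
            intro a' _
            simp [hA]
      _ = (Finset.univ.filter (fun p : TorusV d N × TorusV d N =>
            onPath d N a (cpath d N p.1 p.2))).card * (2 * (d * N)) := by
          rw [Finset.sum_ite, Finset.sum_const, Finset.sum_const_zero, add_zero, smul_eq_mul]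
      _ ≤ N ^ (d + 1) * (2 * (d * N)) := by
          exact Nat.mul_le_mul_right _ (card_onPath_le hN a)
      _ ≤ 4 * d * N ^ (d + 2) := by
          have : N ^ (d + 1) * (2 * (d * N)) = 2 * d * N ^ (d + 2) := by ring
          rw [this]
          have : 2 * d * N ^ (d + 2) ≤ 4 * d * N ^ (d + 2) := by
            apply Nat.mul_le_mul_right
            omega
          exact this

/-- the congestion quantity
`M_N = N^{-d} max_a Σ_{a'} M(a,a')` of the canonical paths satisfies `M_N ≤ 4dN²`. -/
theorem canonical_path_congestion (d N : ℕ) [NeZero N] (hd : 0 < d) :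
    ((N : ℝ) ^ d)⁻¹ *
        (⨆ a : Bond d N, ∑ a' : Bond d N, (Mcount d N a a' : ℝ))
      ≤ 4 * d * (N : ℝ) ^ 2 := by
  have hNpos : 0 < N := NeZero.pos N
  haveI : Nonempty (Fin d) := ⟨⟨0, hd⟩⟩
  have hsup : (⨆ a : Bond d N, ∑ a' : Bond d N, (Mcount d N a a' : ℝ))
      ≤ 4 * d * (N : ℝ) ^ (d + 2) := by
    apply ciSup_le
    intro a
    have h := sum_Mcount_le (d := d) (N := N) a
    calc ∑ a' : Bond d N, (Mcount d N a a' : ℝ)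
        = ((∑ a' : Bond d N, Mcount d N a a' : ℕ) : ℝ) := by push_cast; rfl
      _ ≤ ((4 * d * N ^ (d + 2) : ℕ) : ℝ) := by exact_mod_cast h
      _ = 4 * d * (N : ℝ) ^ (d + 2) := by push_cast; ring
  have hpow : (0 : ℝ) < (N : ℝ) ^ d := by positivity
  calc ((N : ℝ) ^ d)⁻¹ * (⨆ a : Bond d N, ∑ a' : Bond d N, (Mcount d N a a' : ℝ))
      ≤ ((N : ℝ) ^ d)⁻¹ * (4 * d * (N : ℝ) ^ (d + 2)) := by
        apply mul_le_mul_of_nonneg_left hsup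
        positivity
    _ = 4 * d * (N : ℝ) ^ 2 := by
        rw [pow_add]
        field_simp
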